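/- Let s_o and ŝ be probability densities on [0,1] with ŝ ≥ x/(1+x) pointwise for some x > 0 and sup ln(s_o/ŝ) ≤ ln(1 + 1/x). Then ∫ s_o (ln(s_o/ŝ))² dμ ≤ (2 + 3 ln(1 + 1/x)) ∫ s_o ln(s_o/ŝ) dμ. In particular the conditional variance of the log-likelihood contrast is at most (2 + 3 ln(1 + 1/x)) times the Kullback excess risk. -/

import Mathlib

open MeasureTheory

private lemma hasDerivAt_aux (c u : ℝ) (hu : 0 < u) :
    HasDerivAt (fun v => c * (v * Real.log v - v + 1) - v * (Real.log v) ^ 2)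
      (c * Real.log u - ((Real.log u) ^ 2 + 2 * Real.log u)) u := by
  have hlog := Real.hasDerivAt_log (ne_of_gt hu)
  have h1 : HasDerivAt (fun v => v * Real.log v) (Real.log u + 1) u := by
    have := (hasDerivAt_id u).mul hlog
    refine this.congr_deriv ?_
    field_simp
    simp only [id]
    ring
  have h2 : HasDerivAt (fun v => v * (Real.log v) ^ 2)
      ((Real.log u) ^ 2 + 2 * Real.log u) u := by
    have hsq : HasDerivAt (fun v => (Real.log v) ^ 2) (2 * Real.log u * (1 / u)) u := by
      have := hlog.pow 2
      refine this.congr_deriv ?_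
      ring
    have := (hasDerivAt_id u).mul hsq
    refine this.congr_deriv ?_
    field_simp
    simp only [id]
    ring
  have h3 : HasDerivAt (fun v => c * (v * Real.log v - v + 1))
      (c * Real.log u) u := by
    have := (((h1.sub (hasDerivAt_id u)).add_const 1).const_mul c)
    refine this.congr_deriv ?_
    ring
  exact h3.sub h2

private lemma scalarA {u : ℝ} (hu : 0 < u) (hu1 : u ≤ 1) :
    u * (Real.log u) ^ 2 ≤ 2 * (u * Real.log u - u + 1) := by
  set f : ℝ → ℝ := fun v => 2 * (v * Real.log v - v + 1) - v * (Real.log v) ^ 2 with hf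
  have hdiff : DifferentiableOn ℝ f (Set.Icc u 1) := fun v hv =>
    ((hasDerivAt_aux 2 v (lt_of_lt_of_le hu hv.1)).differentiableAt).differentiableWithinAt
  have hanti : AntitoneOn f (Set.Icc u 1) := by
    apply antitoneOn_of_deriv_nonpos (convex_Icc u 1) hdiff.continuousOn
      (hdiff.mono interior_subset)
    intro v hv
    rw [interior_Icc] at hv
    have hv0 : 0 < v := lt_trans hu hv.1
    rw [(hasDerivAt_aux 2 v hv0).deriv]
    nlinarith [sq_nonneg (Real.log v)]
  have h1 : f 1 ≤ f u := hanti (Set.left_mem_Icc.2 hu1) (Set.right_mem_Icc.2 hu1) hu1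
  simp [hf, Real.log_one] at h1
  linarith

private lemma scalarB {L u : ℝ} (hL : 0 ≤ L) (hu1 : 1 ≤ u) (hlog : Real.log u ≤ L) :
    u * (Real.log u) ^ 2 ≤ (2 + 3 * L) * (u * Real.log u - u + 1) := by
  set f : ℝ → ℝ := fun v => (2 + 3 * L) * (v * Real.log v - v + 1) - v * (Real.log v) ^ 2 with hf
  have hdiff : DifferentiableOn ℝ f (Set.Icc 1 u) := fun v hv =>
    ((hasDerivAt_aux (2 + 3 * L) v (lt_of_lt_of_le one_pos hv.1)).differentiableAt).differentiableWithinAt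
  have hmono : MonotoneOn f (Set.Icc 1 u) := by
    apply monotoneOn_of_deriv_nonneg (convex_Icc 1 u) hdiff.continuousOn
      (hdiff.mono interior_subset)
    intro v hv
    rw [interior_Icc] at hv
    have hv0 : (0:ℝ) < v := lt_trans one_pos hv.1
    rw [(hasDerivAt_aux (2 + 3 * L) v hv0).deriv]
    have hlv0 : 0 ≤ Real.log v := Real.log_nonneg (le_of_lt hv.1)
    have hlvL : Real.log v ≤ L := le_trans (Real.log_le_log hv0 (le_of_lt hv.2)) hlog
    nlinarith
  have h1 : f 1 ≤ f u := hmono (Set.left_mem_Icc.2 hu1) (Set.right_mem_Icc.2 hu1) hu1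
  simp [hf, Real.log_one] at h1
  linarith

theorem kullback_second_moment_bound
    {α : Type*} [MeasurableSpace α] (μ : Measure α)
    (so shat : α → ℝ) (x : ℝ) (hx : 0 < x)
    (hso0 : ∀ a, 0 ≤ so a) (hso1 : ∫ a, so a ∂μ = 1)
    (hshat1 : ∫ a, shat a ∂μ = 1)
    (hsomeas : Measurable so) (hshatmeas : Measurable shat)
    (hshatlow : ∀ a, x / (1 + x) ≤ shat a)
    (hratio : ∀ a, Real.log (so a / shat a) ≤ Real.log (1 + 1 / x))
    (hint1 : Integrable (fun a => so a * (Real.log (so a / shat a)) ^ 2) μ)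
    (hint2 : Integrable (fun a => so a * Real.log (so a / shat a)) μ) :
    ∫ a, so a * (Real.log (so a / shat a)) ^ 2 ∂μ
      ≤ (2 + 3 * Real.log (1 + 1 / x)) * ∫ a, so a * Real.log (so a / shat a) ∂μ := by
  set L := Real.log (1 + 1 / x) with hLdef
  set C := 2 + 3 * L with hCdef
  have hL : 0 ≤ L := Real.log_nonneg (by nlinarith [one_div_pos.2 hx])
  have hC : 0 ≤ C := by simp [hCdef]; linarith
  have hshpos : ∀ a, 0 < shat a := fun a =>
    lt_of_lt_of_le (div_pos hx (by linarith)) (hshatlow a)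
  -- pointwise inequality
  have key : ∀ a, so a * (Real.log (so a / shat a)) ^ 2
      ≤ C * (so a * Real.log (so a / shat a) - so a + shat a) := by
    intro a
    rcases (hso0 a).eq_or_lt with h0 | h0
    · rw [← h0]
      simp
      nlinarith [mul_nonneg hC (hshpos a).le]
    · set u := so a / shat a with hudef
      have hu : 0 < u := div_pos h0 (hshpos a)
      have hsoeq : so a = u * shat a :=
        (div_mul_cancel₀ (so a) (ne_of_gt (hshpos a))).symm
      have hg : u * (Real.log u) ^ 2 ≤ C * (u * Real.log u - u + 1) := by
        rcases le_or_gt u 1 with h1 | h1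
        · have hA := scalarA hu h1
          have hg0 : 0 ≤ u * Real.log u - u + 1 := by nlinarith [sq_nonneg (Real.log u), mul_nonneg hu.le (sq_nonneg (Real.log u))]
          nlinarith
        · exact scalarB hL h1.le (hratio a)
      calc so a * (Real.log u) ^ 2 = shat a * (u * (Real.log u) ^ 2) := by
            rw [hsoeq]; ring
        _ ≤ shat a * (C * (u * Real.log u - u + 1)) :=
            mul_le_mul_of_nonneg_left hg (hshpos a).le
        _ = C * (so a * Real.log u - so a + shat a) := by
            rw [hsoeq]; ring
  -- integrability
  have hIso : Integrable so μ := by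
    by_contra h
    rw [integral_undef h] at hso1
    exact one_ne_zero hso1.symm
  have hIsh : Integrable shat μ := by
    by_contra h
    rw [integral_undef h] at hshat1
    exact one_ne_zero hshat1.symm
  have hIrhs : Integrable
      (fun a => C * (so a * Real.log (so a / shat a) - so a + shat a)) μ :=
    (((hint2.sub hIso).add hIsh).const_mul C)
  calc ∫ a, so a * (Real.log (so a / shat a)) ^ 2 ∂μ
      ≤ ∫ a, C * (so a * Real.log (so a / shat a) - so a + shat a) ∂μ :=
        integral_mono hint1 hIrhs key
    _ = C * ((∫ a, so a * Real.log (so a / shat a) ∂μ) - 1 + 1) := by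
        have hsub : Integrable (fun a => so a * Real.log (so a / shat a) - so a) μ :=
          hint2.sub hIso
        rw [integral_const_mul, integral_add hsub hIsh,
          integral_sub hint2 hIso, hso1, hshat1]
    _ = C * ∫ a, so a * Real.log (so a / shat a) ∂μ := by ring
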